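/- Any polynomial of degree at most ℓ in one real variable is (C, 1/ℓ)-good on ℝ with respect to Lebesgue measure, for a constant C depending only on ℓ. That is, for any interval B ⊂ ℝ and any ε > 0, λ({x ∈ B : |f(x)| < ε}) ≤ C (ε / sup_{x∈B}|f(x)|)^{1/ℓ} λ(B). -/

import Mathlib

open MeasureTheory
open Set

/-- Node selection: in a measurable set `E ⊆ [a,b]` of measure `m > 0` we can find
`n+1` points that are pairwise separated proportionally to `m`. -/
lemma exists_spread_nodes (n : ℕ) (a b : ℝ) (E : Set ℝ) (hEm : MeasurableSet E)
    (hEs : E ⊆ Set.Icc a b) (m : ℝ) (hm : 0 < m) (hvol : volume E = ENNReal.ofReal m) :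
    ∃ s : Fin (n+1) → ℝ, (∀ i, s i ∈ E) ∧
      ∀ i j : Fin (n+1), i < j →
        (((j:ℕ) - (i:ℕ) : ℕ) : ℝ) * (m / (2*n+2)) ≤ s j - s i := by
  set δ : ℝ := m / (2*n+2) with hδdef
  have hδ : 0 < δ := by positivity
  have hfin : ∀ t : ℝ, volume (E ∩ Set.Iic t) ≠ ⊤ := by
    intro t
    refine ne_top_of_le_ne_top ?_ (measure_mono (inter_subset_left))
    rw [hvol]; exact ENNReal.ofReal_ne_top
  set g : ℝ → ℝ := fun t => (volume (E ∩ Set.Iic t)).toReal with hgdef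
  have hmono : Monotone g := by
    intro t t' h
    exact ENNReal.toReal_mono (hfin t')
      (measure_mono (inter_subset_inter_right _ (Iic_subset_Iic.2 h)))
  have hadd : ∀ t t' : ℝ, t ≤ t' →
      g t' = g t + (volume (E ∩ Set.Ioc t t')).toReal := by
    intro t t' h
    have hdisj : Disjoint (E ∩ Set.Iic t) (E ∩ Set.Ioc t t') := by
      refine Set.disjoint_left.2 ?_
      rintro y ⟨-, hy1⟩ ⟨-, hy2⟩
      exact absurd hy1 (not_le.2 hy2.1)
    have hun : E ∩ Set.Iic t' = (E ∩ Set.Iic t) ∪ (E ∩ Set.Ioc t t') := by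
      rw [← Set.inter_union_distrib_left, Set.Iic_union_Ioc_eq_Iic h]
    have hmu := measure_union (μ := volume) hdisj (hEm.inter measurableSet_Ioc)
    rw [hgdef]
    simp only [hun, hmu]
    rw [ENNReal.toReal_add (hfin t)]
    refine ne_top_of_le_ne_top (hvol ▸ ENNReal.ofReal_ne_top : volume E ≠ ⊤) ?_
    exact measure_mono inter_subset_left
  have hlip : ∀ t t' : ℝ, t ≤ t' → g t' - g t ≤ t' - t := by
    intro t t' h
    rw [hadd t t' h]
    have h1 : volume (E ∩ Set.Ioc t t') ≤ ENNReal.ofReal (t' - t) := by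
      refine le_trans (measure_mono inter_subset_right) ?_
      rw [Real.volume_Ioc]
    have := ENNReal.toReal_mono ENNReal.ofReal_ne_top h1
    rw [ENNReal.toReal_ofReal (by linarith)] at this
    linarith
  have hcont : Continuous g := by
    refine LipschitzWith.continuous (K := 1) (LipschitzWith.of_dist_le_mul ?_)
    intro p q
    rw [Real.dist_eq, Real.dist_eq]; push_cast; rw [one_mul]
    rcases le_total p q with h | h
    · rw [abs_sub_comm (g p), abs_sub_comm p,
        abs_of_nonneg (sub_nonneg.2 (hmono h)), abs_of_nonneg (sub_nonneg.2 h)]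
      exact hlip p q h
    · rw [abs_of_nonneg (sub_nonneg.2 (hmono h)), abs_of_nonneg (sub_nonneg.2 h)]
      exact hlip q p h
  have hEne : E.Nonempty := by
    rcases Set.eq_empty_or_nonempty E with h | h
    · rw [h, measure_empty] at hvol
      exact absurd hvol.symm (ne_of_gt (ENNReal.ofReal_pos.2 hm))
    · exact h
  have hab : a ≤ b := by
    obtain ⟨y, hy⟩ := hEne
    have := hEs hy
    exact le_trans this.1 this.2
  have hga : g a = 0 := by
    have hsub : E ∩ Set.Iic a ⊆ {a} := by
      rintro y ⟨hy1, hy2⟩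
      exact le_antisymm hy2 (hEs hy1).1
    have := measure_mono (μ := volume) hsub
    rw [Real.volume_singleton] at this
    have h0 : volume (E ∩ Set.Iic a) = 0 := le_antisymm this zero_le
    simp [hgdef, h0]
  have hgb : g b = m := by
    have : E ∩ Set.Iic b = E := by
      refine Set.inter_eq_left.2 ?_
      intro y hy; exact (hEs hy).2
    rw [hgdef]; simp only [this, hvol]
    exact ENNReal.toReal_ofReal hm.le
  have hivt : ∀ c : ℝ, 0 ≤ c → c ≤ m → ∃ tt ∈ Set.Icc a b, g tt = c := by
    intro c h1 h2
    have := intermediate_value_Icc hab hcont.continuousOn (a := a) (b := b)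
    have hc : c ∈ Set.Icc (g a) (g b) := by rw [hga, hgb]; exact ⟨h1, h2⟩
    obtain ⟨tt, htt, htt2⟩ := this hc
    exact ⟨tt, htt, htt2⟩
  have hmin : ∀ k : ℕ, ∃ tt, tt ∈ Set.Icc a b ∧ g tt = min ((k:ℝ) * δ) m := by
    intro k
    obtain ⟨tt, h1, h2⟩ := hivt (min ((k:ℝ)*δ) m) (le_min (by positivity) hm.le) (min_le_right _ _)
    exact ⟨tt, h1, h2⟩
  choose t ht1 ht2 using hmin
  have hδm : ((2*n+2 : ℕ) : ℝ) * δ = m := by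
    rw [hδdef]
    push_cast
    field_simp
  have hgt : ∀ k : ℕ, k ≤ 2*n+2 → g (t k) = (k:ℝ) * δ := by
    intro k hk
    rw [ht2 k, min_eq_left]
    calc (k:ℝ) * δ ≤ ((2*n+2:ℕ):ℝ) * δ := by
          apply mul_le_mul_of_nonneg_right _ hδ.le
          exact_mod_cast hk
      _ = m := hδm
  have hlt : ∀ k l : ℕ, k ≤ 2*n+2 → l ≤ 2*n+2 → k < l → t k < t l := by
    intro k l hk hl hkl
    by_contra hc
    push_neg at hc
    have := hmono hc
    rw [hgt k hk, hgt l hl] at this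
    have : (l:ℝ) * δ ≤ (k:ℝ) * δ := this
    have hcast : (k:ℝ) < l := by exact_mod_cast hkl
    nlinarith
  have hpos : ∀ i : Fin (n+1), (E ∩ Set.Ioc (t (2*i)) (t (2*i+1))).Nonempty := by
    intro i
    have hi : (i:ℕ) ≤ n := Nat.lt_succ_iff.mp i.isLt
    have h1 : 2*(i:ℕ) ≤ 2*n+2 := by omega
    have h2 : 2*(i:ℕ)+1 ≤ 2*n+2 := by omega
    have hle : t (2*i) ≤ t (2*i+1) := (hlt _ _ h1 h2 (by omega)).le
    have hvol2 := hadd _ _ hle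
    rw [hgt _ h2, hgt _ h1] at hvol2
    have : (volume (E ∩ Set.Ioc (t (2*i)) (t (2*i+1)))).toReal = δ := by
      push_cast at hvol2 ⊢
      linarith
    apply MeasureTheory.nonempty_of_measure_ne_zero (μ := volume)
    intro hzero
    rw [hzero] at this
    simp at this
    linarith
  choose s hs1 hs2 using hpos
  refine ⟨s, fun i => hs1 i, ?_⟩
  intro i j hij
  have hijn : (i:ℕ) < (j:ℕ) := hij
  have hi : (i:ℕ) ≤ n := Nat.lt_succ_iff.mp i.isLt
  have hj : (j:ℕ) ≤ n := Nat.lt_succ_iff.mp j.isLt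
  have h1 : 2*(i:ℕ)+1 ≤ 2*n+2 := by omega
  have h2 : 2*(j:ℕ) ≤ 2*n+2 := by omega
  have hle : t (2*i+1) ≤ t (2*j) := (hlt _ _ h1 h2 (by omega)).le
  have hgap := hlip _ _ hle
  rw [hgt _ h2, hgt _ h1] at hgap
  have hsi : s i ≤ t (2*i+1) := (hs2 i).2
  have hsj : t (2*j) < s j := (hs2 j).1
  have hcast : ((((j:ℕ) - (i:ℕ) : ℕ)):ℝ) = (j:ℕ) - ((i:ℕ):ℝ) := by
    push_cast [Nat.cast_sub hijn.le]
    ring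
  rw [hcast]
  have hji1 : ((i:ℕ):ℝ) + 1 ≤ ((j:ℕ):ℝ) := by exact_mod_cast hijn
  push_cast at hgap
  nlinarith

open Finset in
lemma lagrange_abs_bound {n : ℕ} (f : Polynomial ℝ) (hdeg : f.degree < (n+1 : ℕ))
    (s : Fin (n+1) → ℝ) (hs : Function.Injective s) (x : ℝ) :
    |f.eval x| ≤ ∑ i : Fin (n+1), |f.eval (s i)| *
      ∏ j ∈ Finset.univ.erase i, (|x - s j| / |s i - s j|) := by
  have hinj : Set.InjOn s (Finset.univ : Finset (Fin (n+1))) := fun a _ b _ h => hs h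
  have hcard : f.degree < (#(Finset.univ : Finset (Fin (n+1))) : ℕ) := by
    simpa using hdeg
  have hf := Lagrange.eq_interpolate (v := s) hinj hcard
  calc |f.eval x|
      = |(Lagrange.interpolate Finset.univ s (fun i => f.eval (s i))).eval x| := by rw [← hf]
    _ = |∑ i : Fin (n+1), f.eval (s i) * (Lagrange.basis Finset.univ s i).eval x| := by
        rw [Lagrange.interpolate_apply]
        rw [Polynomial.eval_finset_sum]
        simp [Polynomial.eval_mul]
    _ ≤ ∑ i : Fin (n+1), |f.eval (s i) * (Lagrange.basis Finset.univ s i).eval x| :=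
        Finset.abs_sum_le_sum_abs _ _
    _ ≤ ∑ i : Fin (n+1), |f.eval (s i)| *
          ∏ j ∈ Finset.univ.erase i, (|x - s j| / |s i - s j|) := by
        apply Finset.sum_le_sum
        intro i _
        rw [abs_mul]
        apply mul_le_mul_of_nonneg_left _ (abs_nonneg _)
        rw [Lagrange.basis, Polynomial.eval_prod, abs_prod]
        apply le_of_eq
        apply Finset.prod_congr rfl
        intro j _
        rw [Lagrange.basisDivisor]
        simp only [Polynomial.eval_mul, Polynomial.eval_C, Polynomial.eval_sub, Polynomial.eval_X]
        rw [abs_mul, abs_inv, div_eq_inv_mul]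


/-- **Polynomials are `(C, 1/ℓ)`-good** (Kleinbock–Margulis, Lemma 3.2): for each
`ℓ ≥ 1` there is `C > 0` depending only on `ℓ` such that for every nonzero real
polynomial `f` of degree at most `ℓ`, every interval `B` and every `ε > 0`,
`λ({x ∈ B : |f(x)| < ε}) ≤ C (ε / sup_B |f|)^{1/ℓ} λ(B)`. -/
theorem polynomial_good (ℓ : ℕ) (hℓ : 1 ≤ ℓ) :
    ∃ C > (0:ℝ), ∀ f : Polynomial ℝ, f ≠ 0 → f.natDegree ≤ ℓ →
      ∀ (x r : ℝ), 0 < r → ∀ ε > (0:ℝ),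
        volume {y ∈ Metric.closedBall x r | |f.eval y| < ε} ≤
          ENNReal.ofReal
            (C * (ε / sSup ((fun y => |f.eval y|) '' Metric.closedBall x r)) ^ ((1:ℝ)/ℓ)) *
          volume (Metric.closedBall x r) := by
  refine ⟨2*((ℓ:ℝ)+1)^2, by positivity, ?_⟩
  intro f hf hdeg x r hr ε hε
  set B := Metric.closedBall x r with hB
  have hBIcc : B = Set.Icc (x - r) (x + r) := Real.closedBall_eq_Icc
  set M := sSup ((fun y => |f.eval y|) '' B) with hM
  have hBne : B.Nonempty := ⟨x, Metric.mem_closedBall_self hr.le⟩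
  have hcomp : IsCompact B := isCompact_closedBall x r
  have hcontf : Continuous fun y => |f.eval y| := (Polynomial.continuous f).abs
  have hbdd : BddAbove ((fun y => |f.eval y|) '' B) :=
    (hcomp.image hcontf).bddAbove
  have hle : ∀ y ∈ B, |f.eval y| ≤ M := fun y hy => le_csSup hbdd ⟨y, hy, rfl⟩
  have hM0 : 0 < M := by
    obtain ⟨y, hyB, hy⟩ : ∃ y ∈ B, f.eval y ≠ 0 := by
      by_contra hc
      push_neg at hc
      refine hf (Polynomial.eq_zero_of_infinite_isRoot f ?_)
      have hinf : (B : Set ℝ).Infinite := by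
        rw [hBIcc]; exact Set.Icc_infinite (by linarith)
      refine Set.Infinite.mono ?_ hinf
      intro y hy
      exact hc y hy
    exact lt_of_lt_of_le (abs_pos.2 hy) (hle y hyB)
  set S := {y ∈ B | |f.eval y| < ε} with hS
  have hSmeas : MeasurableSet S := by
    have heq : S = B ∩ {y | |f.eval y| < ε} := rfl
    rw [heq]
    exact measurableSet_closedBall.inter (isOpen_lt hcontf continuous_const).measurableSet
  have hSB : S ⊆ B := fun y hy => hy.1
  have hBvol : volume B = ENNReal.ofReal (2*r) := by
    rw [hB, Real.volume_closedBall]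
  have hSfin : volume S ≠ ⊤ :=
    ne_top_of_le_ne_top (hBvol ▸ ENNReal.ofReal_ne_top : volume B ≠ ⊤) (measure_mono hSB)
  set m := (volume S).toReal with hm
  have hvolS : volume S = ENNReal.ofReal m := (ENNReal.ofReal_toReal hSfin).symm
  have hCnn : 0 ≤ 2*((ℓ:ℝ)+1)^2 * (ε / M) ^ ((1:ℝ)/ℓ) := by positivity
  rcases (ENNReal.toReal_nonneg : (0:ℝ) ≤ m).eq_or_lt with h0 | h0
  · have hm0 : m = 0 := h0.symm
    have hz : volume S = 0 := by rw [hvolS, hm0, ENNReal.ofReal_zero]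
    rw [hz]; exact zero_le
  -- main case : m > 0
  obtain ⟨s, hsmem, hspread⟩ := exists_spread_nodes ℓ (x - r) (x + r) S hSmeas
    (hBIcc ▸ hSB) m h0 hvolS
  set δ : ℝ := m / (2*ℓ+2) with hδdef
  have hδ : 0 < δ := by positivity
  have hgap : ∀ i j : Fin (ℓ+1), i ≠ j → δ ≤ |s i - s j| := by
    have key : ∀ i j : Fin (ℓ+1), i < j → δ ≤ |s i - s j| := by
      intro i j hij
      have h1 := hspread i j hij
      have h2 : (1:ℝ) ≤ (((j:ℕ) - (i:ℕ) : ℕ) : ℝ) := by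
        have : 1 ≤ (j:ℕ) - (i:ℕ) := by omega
        exact_mod_cast this
      rw [abs_sub_comm]
      refine le_trans ?_ (le_abs_self _)
      nlinarith
    intro i j hij
    rcases lt_or_gt_of_ne hij with h | h
    · exact key i j h
    · rw [abs_sub_comm]; exact key j i h
  have hsinj : Function.Injective s := by
    intro i j hij
    by_contra hc
    have := hgap i j hc
    rw [hij, sub_self, abs_zero] at this
    linarith
  have hdeg' : f.degree < (ℓ+1 : ℕ) := by
    refine lt_of_le_of_lt (Polynomial.degree_le_natDegree) ?_
    exact_mod_cast Nat.lt_succ_of_le hdeg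
  have habs2r : ∀ y z, y ∈ B → z ∈ B → |y - z| ≤ 2*r := by
    intro y z hy hz
    rw [hB, Metric.mem_closedBall, Real.dist_eq] at hy hz
    have := abs_sub_abs_le_abs_sub y z
    calc |y - z| = |(y - x) - (z - x)| := by ring_nf
      _ ≤ |y - x| + |z - x| := abs_sub _ _
      _ ≤ 2*r := by linarith
  have hsup_bound : ∀ y ∈ B, |f.eval y| ≤ ((ℓ:ℝ)+1) * (ε * (2*r/δ)^ℓ) := by
    intro y hy
    refine le_trans (lagrange_abs_bound f hdeg' s hsinj y) ?_
    have hterm : ∀ i : Fin (ℓ+1), |f.eval (s i)| *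
        (∏ j ∈ Finset.univ.erase i, (|y - s j| / |s i - s j|)) ≤ ε * (2*r/δ)^ℓ := by
      intro i
      have hprod : (∏ j ∈ Finset.univ.erase i, (|y - s j| / |s i - s j|)) ≤ (2*r/δ)^ℓ := by
        have hcard : (Finset.univ.erase i).card = ℓ := by
          rw [Finset.card_erase_of_mem (Finset.mem_univ i), Finset.card_univ]
          simp
        have hstep : (∏ j ∈ Finset.univ.erase i, (|y - s j| / |s i - s j|))
            ≤ (∏ _j ∈ Finset.univ.erase i, (2*r/δ)) := by
          refine Finset.prod_le_prod (fun j _ => by positivity) ?_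
          intro j hj
          have hjne : i ≠ j := fun h => (Finset.mem_erase.1 hj).1 h.symm
          refine div_le_div₀ (by positivity) ?_ hδ (hgap i j hjne)
          exact habs2r y (s j) hy (hSB (hsmem j))
        rw [Finset.prod_const, hcard] at hstep
        exact hstep
      refine mul_le_mul ?_ hprod (Finset.prod_nonneg (fun j _ => by positivity)) hε.le
      exact (hsmem i).2.le
    have hsum : (∑ i : Fin (ℓ+1), |f.eval (s i)| *
          ∏ j ∈ Finset.univ.erase i, (|y - s j| / |s i - s j|))
        ≤ (∑ _i : Fin (ℓ+1), ε * (2*r/δ)^ℓ) := by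
      exact Finset.sum_le_sum (fun i _ => hterm i)
    refine le_trans hsum (le_of_eq ?_)
    rw [Finset.sum_const, Finset.card_univ, Fintype.card_fin, nsmul_eq_mul]
    push_cast
    ring
  have hMle : M ≤ ((ℓ:ℝ)+1) * (ε * (2*r/δ)^ℓ) :=
    csSup_le (hBne.image _) (by rintro _ ⟨y, hy, rfl⟩; exact hsup_bound y hy)
  -- from here: m^ℓ ≤ A
  have hℓR : (1:ℝ) ≤ (ℓ:ℝ) := by exact_mod_cast hℓ
  have hmδ : m = δ * (2*(ℓ:ℝ)+2) := by rw [hδdef]; field_simp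
  have hA : m^ℓ ≤ (((ℓ:ℝ)+1) * (ε / M)) * ((2*(ℓ:ℝ)+2) * (2*r))^ℓ := by
    have h1 : M * δ^ℓ ≤ ((ℓ:ℝ)+1) * ε * (2*r)^ℓ := by
      have hdp : (2*r/δ)^ℓ = (2*r)^ℓ / δ^ℓ := div_pow _ _ _
      rw [hdp] at hMle
      have hδℓ : (0:ℝ) < δ^ℓ := by positivity
      calc M * δ^ℓ ≤ (((ℓ:ℝ)+1) * (ε * ((2*r)^ℓ / δ^ℓ))) * δ^ℓ :=
            mul_le_mul_of_nonneg_right hMle hδℓ.le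
        _ = ((ℓ:ℝ)+1) * ε * (2*r)^ℓ := by field_simp
    have h2 : δ^ℓ ≤ ((ℓ:ℝ)+1) * (ε / M) * (2*r)^ℓ := by
      rw [div_eq_mul_inv]
      have := mul_le_mul_of_nonneg_right h1 (inv_nonneg.2 hM0.le)
      calc δ^ℓ = M * δ^ℓ * M⁻¹ := by field_simp
        _ ≤ ((ℓ:ℝ)+1) * ε * (2*r)^ℓ * M⁻¹ := this
        _ = ((ℓ:ℝ)+1) * (ε * M⁻¹) * (2*r)^ℓ := by ring
    calc m^ℓ = δ^ℓ * (2*(ℓ:ℝ)+2)^ℓ := by rw [hmδ, mul_pow]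
      _ ≤ (((ℓ:ℝ)+1) * (ε / M) * (2*r)^ℓ) * (2*(ℓ:ℝ)+2)^ℓ := by
          refine mul_le_mul_of_nonneg_right h2 (by positivity)
      _ = (((ℓ:ℝ)+1) * (ε / M)) * ((2*(ℓ:ℝ)+2) * (2*r))^ℓ := by
          rw [mul_pow (2*(ℓ:ℝ)+2) (2*r) ℓ]; ring
  have hℓne : ((ℓ:ℝ)) ≠ 0 := by positivity
  have hεM : (0:ℝ) ≤ ε / M := by positivity
  have hmle : m ≤ 2*((ℓ:ℝ)+1)^2 * (ε / M) ^ ((1:ℝ)/ℓ) * (2*r) := by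
    have hm1 : m = (m^ℓ) ^ ((1:ℝ)/ℓ) := by
      rw [← Real.rpow_natCast m ℓ, ← Real.rpow_mul h0.le]
      rw [mul_one_div, div_self hℓne, Real.rpow_one]
    have hA0 : (0:ℝ) ≤ (((ℓ:ℝ)+1) * (ε / M)) * ((2*(ℓ:ℝ)+2) * (2*r))^ℓ := by positivity
    have hstep : m ≤ ((((ℓ:ℝ)+1) * (ε / M)) * ((2*(ℓ:ℝ)+2) * (2*r))^ℓ) ^ ((1:ℝ)/ℓ) := by
      rw [hm1]
      exact Real.rpow_le_rpow (by positivity) hA (by positivity)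
    have hsplit : ((((ℓ:ℝ)+1) * (ε / M)) * ((2*(ℓ:ℝ)+2) * (2*r))^ℓ) ^ ((1:ℝ)/ℓ)
        = (((ℓ:ℝ)+1)) ^ ((1:ℝ)/ℓ) * (ε / M) ^ ((1:ℝ)/ℓ) * ((2*(ℓ:ℝ)+2) * (2*r)) := by
      rw [Real.mul_rpow (by positivity) (by positivity),
        Real.mul_rpow (by positivity) hεM]
      congr 1
      rw [← Real.rpow_natCast ((2*(ℓ:ℝ)+2) * (2*r)) ℓ, ← Real.rpow_mul (by positivity)]
      rw [mul_one_div, div_self hℓne, Real.rpow_one]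
    have hbase : (((ℓ:ℝ)+1)) ^ ((1:ℝ)/ℓ) ≤ (ℓ:ℝ)+1 := by
      calc (((ℓ:ℝ)+1)) ^ ((1:ℝ)/ℓ) ≤ (((ℓ:ℝ)+1)) ^ (1:ℝ) := by
            refine Real.rpow_le_rpow_of_exponent_le (by linarith) ?_
            rw [div_le_one (by linarith)]
            exact hℓR
        _ = (ℓ:ℝ)+1 := Real.rpow_one _
    have hrpnn : (0:ℝ) ≤ (ε / M) ^ ((1:ℝ)/ℓ) := Real.rpow_nonneg hεM _
    calc m ≤ (((ℓ:ℝ)+1)) ^ ((1:ℝ)/ℓ) * (ε / M) ^ ((1:ℝ)/ℓ) * ((2*(ℓ:ℝ)+2) * (2*r)) := by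
          rw [← hsplit]; exact hstep
      _ ≤ ((ℓ:ℝ)+1) * (ε / M) ^ ((1:ℝ)/ℓ) * ((2*(ℓ:ℝ)+2) * (2*r)) := by
          refine mul_le_mul_of_nonneg_right (mul_le_mul_of_nonneg_right hbase hrpnn) ?_
          positivity
      _ = 2*((ℓ:ℝ)+1)^2 * (ε / M) ^ ((1:ℝ)/ℓ) * (2*r) := by ring
  rw [hvolS, hBvol, ← ENNReal.ofReal_mul hCnn]
  exact ENNReal.ofReal_le_ofReal hmle
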